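/- arXiv:2512.06349 — 2 statements merged into one kernel-verified Lean document; each statement's English description precedes it below -/
import Mathlib

section
/- Assume ρ* > 0 and that η(x) < ∞ for every G-measurable x ∈ L²(Ω;ℝⁿ). Then η is a norm on the space of G-measurable elements of L²(Ω;ℝⁿ): η(x) ≥ 0 for all x, with η(x) = 0 if and only if x = 0 almost surely; η(α·x) = |α|·η(x) for every scalar α; and η(x + y) ≤ η(x) + η(y) for all x, y. -/
open Matrix MeasureTheory ProbabilityTheory
open scoped ENNReal Classical

noncomputable section

namespace SCS

/-! ### Matrix-analytic definitions -/

/-- Rayleigh-quotient definition of the largest eigenvalue of a symmetric matrix. -/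
def lamMax {n : ℕ} (M : Matrix (Fin n) (Fin n) ℝ) : ℝ :=
  ⨆ x : {x : Fin n → ℝ // x ⬝ᵥ x = 1}, x.1 ⬝ᵥ M.mulVec x.1

/-- Rayleigh-quotient definition of the smallest eigenvalue of a symmetric matrix. -/
def lamMin {n : ℕ} (M : Matrix (Fin n) (Fin n) ℝ) : ℝ :=
  ⨅ x : {x : Fin n → ℝ // x ⬝ᵥ x = 1}, x.1 ⬝ᵥ M.mulVec x.1

/-- Spectral norm (the operator norm induced by the Euclidean norm). -/
def specNorm {p q : ℕ} (M : Matrix (Fin p) (Fin q) ℝ) : ℝ :=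
  Real.sqrt (lamMax (Mᵀ * M))

variable {n m : ℕ}

/-- `R(P) = BᵀPB + σ²·B̄ᵀPB̄`. -/
def Rop (σ : ℝ) (B Bbar : Matrix (Fin n) (Fin m) ℝ) (P : Matrix (Fin n) (Fin n) ℝ) :
    Matrix (Fin m) (Fin m) ℝ :=
  Bᵀ * P * B + σ ^ 2 • (Bbarᵀ * P * Bbar)

/-- `S(P) = AᵀPB + σ²·ĀᵀPB̄`. -/
def Sop (σ : ℝ) (A Abar : Matrix (Fin n) (Fin n) ℝ) (B Bbar : Matrix (Fin n) (Fin m) ℝ)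
    (P : Matrix (Fin n) (Fin n) ℝ) : Matrix (Fin n) (Fin m) ℝ :=
  Aᵀ * P * B + σ ^ 2 • (Abarᵀ * P * Bbar)

/-- `Φ(P) = AᵀPA + σ²·ĀᵀPĀ − S(P)·R(P)⁻¹·S(P)ᵀ`. -/
def Phi (σ : ℝ) (A Abar : Matrix (Fin n) (Fin n) ℝ) (B Bbar : Matrix (Fin n) (Fin m) ℝ)
    (P : Matrix (Fin n) (Fin n) ℝ) : Matrix (Fin n) (Fin n) ℝ :=
  Aᵀ * P * A + σ ^ 2 • (Abarᵀ * P * Abar)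
    - Sop σ A Abar B Bbar P * (Rop σ B Bbar P)⁻¹ * (Sop σ A Abar B Bbar P)ᵀ

/-- `K(P) = R(P)⁻¹·S(P)ᵀ`. -/
def Kgain (σ : ℝ) (A Abar : Matrix (Fin n) (Fin n) ℝ) (B Bbar : Matrix (Fin n) (Fin m) ℝ)
    (P : Matrix (Fin n) (Fin n) ℝ) : Matrix (Fin m) (Fin n) ℝ :=
  (Rop σ B Bbar P)⁻¹ * (Sop σ A Abar B Bbar P)ᵀ

/-- `C_A = λ_max(AAᵀ + σ²·ĀĀᵀ)`. -/
def CA (σ : ℝ) (A Abar : Matrix (Fin n) (Fin n) ℝ) : ℝ :=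
  lamMax (A * Aᵀ + σ ^ 2 • (Abar * Abarᵀ))

/-- `δ_τ = (τ/n)/((1−τ)·C_A + τ)`. -/
def deltaTau (σ : ℝ) (A Abar : Matrix (Fin n) (Fin n) ℝ) (τ : ℝ) : ℝ :=
  (τ / (n : ℝ)) / ((1 - τ) * CA σ A Abar + τ)

/-- The regularized normalized operator
`Φ̂_τ(P) = ((1−τ)·Φ(P) + (τ/n)·I) / Tr((1−τ)·Φ(P) + (τ/n)·I)`. -/
def PhiHat (σ : ℝ) (A Abar : Matrix (Fin n) (Fin n) ℝ) (B Bbar : Matrix (Fin n) (Fin m) ℝ)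
    (τ : ℝ) (P : Matrix (Fin n) (Fin n) ℝ) : Matrix (Fin n) (Fin n) ℝ :=
  (Matrix.trace ((1 - τ) • Phi σ A Abar B Bbar P
      + (τ / (n : ℝ)) • (1 : Matrix (Fin n) (Fin n) ℝ)))⁻¹ •
    ((1 - τ) • Phi σ A Abar B Bbar P + (τ / (n : ℝ)) • (1 : Matrix (Fin n) (Fin n) ℝ))

/-- Inverse of the positive-semidefinite square root (junk value `0` off the PSD cone),
so `invSqrt P = P^{−1/2}` for positive definite `P`. -/
def invSqrt {n : ℕ} (P : Matrix (Fin n) (Fin n) ℝ) : Matrix (Fin n) (Fin n) ℝ :=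
  if h : P.PosSemidef then
    (h.1.eigenvectorUnitary.1 * diagonal (fun i => Real.sqrt (h.1.eigenvalues i))
      * (star h.1.eigenvectorUnitary : Matrix (Fin n) (Fin n) ℝ))⁻¹ else 0

/-- `L(P) = λ_min(P^{−1/2}·Φ(P)·P^{−1/2})`. -/
def Lval (σ : ℝ) (A Abar : Matrix (Fin n) (Fin n) ℝ) (B Bbar : Matrix (Fin n) (Fin m) ℝ)
    (P : Matrix (Fin n) (Fin n) ℝ) : ℝ :=
  lamMin (invSqrt P * Phi σ A Abar B Bbar P * invSqrt P)

/-- `U(P) = λ_max(P^{−1/2}·Φ(P)·P^{−1/2})`. -/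
def Uval (σ : ℝ) (A Abar : Matrix (Fin n) (Fin n) ℝ) (B Bbar : Matrix (Fin n) (Fin m) ℝ)
    (P : Matrix (Fin n) (Fin n) ℝ) : ℝ :=
  lamMax (invSqrt P * Phi σ A Abar B Bbar P * invSqrt P)

/-- The trace-normalized slice `S_a = {X symmetric : X ⪰ a·I, Tr X = 1}`. -/
def Slice (a : ℝ) : Set (Matrix (Fin n) (Fin n) ℝ) :=
  {X | X.IsSymm ∧ (X - a • (1 : Matrix (Fin n) (Fin n) ℝ)).PosSemidef ∧ X.trace = 1}

/-- `α_A = ‖A‖² + σ²·‖Ā‖²` (spectral norms). -/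
def alphaA (σ : ℝ) (A Abar : Matrix (Fin n) (Fin n) ℝ) : ℝ :=
  specNorm A ^ 2 + σ ^ 2 * specNorm Abar ^ 2

/-- `α_S = ‖A‖·‖B‖ + σ²·‖Ā‖·‖B̄‖`. -/
def alphaS (σ : ℝ) (A Abar : Matrix (Fin n) (Fin n) ℝ) (B Bbar : Matrix (Fin n) (Fin m) ℝ) : ℝ :=
  specNorm A * specNorm B + σ ^ 2 * specNorm Abar * specNorm Bbar

/-- `α_R = ‖B‖² + σ²·‖B̄‖²`. -/
def alphaR (σ : ℝ) (B Bbar : Matrix (Fin n) (Fin m) ℝ) : ℝ :=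
  specNorm B ^ 2 + σ ^ 2 * specNorm Bbar ^ 2

/-- `c_R(a) = 1/(a·λ_min(R₀))`. -/
def cR (σ : ℝ) (B Bbar : Matrix (Fin n) (Fin m) ℝ) (a : ℝ) : ℝ :=
  1 / (a * lamMin (Bᵀ * B + σ ^ 2 • (Bbarᵀ * Bbar)))

/-- `L_Φ(a) = α_A + 2·α_S²·c_R(a) + α_S²·α_R·c_R(a)²`. -/
def LPhi (σ : ℝ) (A Abar : Matrix (Fin n) (Fin n) ℝ) (B Bbar : Matrix (Fin n) (Fin m) ℝ)
    (a : ℝ) : ℝ :=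
  alphaA σ A Abar + 2 * alphaS σ A Abar B Bbar ^ 2 * cR σ B Bbar a
    + alphaS σ A Abar B Bbar ^ 2 * alphaR σ B Bbar * cR σ B Bbar a ^ 2

/-- `C_Φ(a) = α_A + α_S²·c_R(a)`. -/
def CPhi (σ : ℝ) (A Abar : Matrix (Fin n) (Fin n) ℝ) (B Bbar : Matrix (Fin n) (Fin m) ℝ)
    (a : ℝ) : ℝ :=
  alphaA σ A Abar + alphaS σ A Abar B Bbar ^ 2 * cR σ B Bbar a

/-- The contraction modulus `Λ(τ)`. -/
def LambdaTau (σ : ℝ) (A Abar : Matrix (Fin n) (Fin n) ℝ) (B Bbar : Matrix (Fin n) (Fin m) ℝ)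
    (τ : ℝ) : ℝ :=
  (1 - τ) * LPhi σ A Abar B Bbar (deltaTau σ A Abar τ) / τ
    + (1 - τ) * ((1 - τ) * CPhi σ A Abar B Bbar (deltaTau σ A Abar τ) + τ / (n : ℝ))
        * (n : ℝ) * LPhi σ A Abar B Bbar (deltaTau σ A Abar τ) / τ ^ 2

/-- The directional derivative `DΦ(P)[H]`. -/
def DPhi (σ : ℝ) (A Abar : Matrix (Fin n) (Fin n) ℝ) (B Bbar : Matrix (Fin n) (Fin m) ℝ)
    (P H : Matrix (Fin n) (Fin n) ℝ) : Matrix (Fin n) (Fin n) ℝ :=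
  Aᵀ * H * A + σ ^ 2 • (Abarᵀ * H * Abar)
    - (Aᵀ * H * B + σ ^ 2 • (Abarᵀ * H * Bbar)) * (Rop σ B Bbar P)⁻¹ * (Sop σ A Abar B Bbar P)ᵀ
    - Sop σ A Abar B Bbar P * (Rop σ B Bbar P)⁻¹ * (Bᵀ * H * A + σ ^ 2 • (Bbarᵀ * H * Abar))
    + Sop σ A Abar B Bbar P * (Rop σ B Bbar P)⁻¹ * (Bᵀ * H * B + σ ^ 2 • (Bbarᵀ * H * Bbar))
        * (Rop σ B Bbar P)⁻¹ * (Sop σ A Abar B Bbar P)ᵀ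

/-- `s_τ(P) = Tr((1−τ)·Φ(P) + (τ/n)·I)`. -/
def sTau (σ : ℝ) (A Abar : Matrix (Fin n) (Fin n) ℝ) (B Bbar : Matrix (Fin n) (Fin m) ℝ)
    (τ : ℝ) (P : Matrix (Fin n) (Fin n) ℝ) : ℝ :=
  Matrix.trace ((1 - τ) • Phi σ A Abar B Bbar P + (τ / (n : ℝ)) • (1 : Matrix (Fin n) (Fin n) ℝ))

/-- The directional derivative
`DΦ̂_τ(P)[H] = ((1−τ)/s_τ(P))·(DΦ(P)[H] − Φ̂_τ(P)·Tr(DΦ(P)[H]))`. -/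
def DPhiHat (σ : ℝ) (A Abar : Matrix (Fin n) (Fin n) ℝ) (B Bbar : Matrix (Fin n) (Fin m) ℝ)
    (τ : ℝ) (P H : Matrix (Fin n) (Fin n) ℝ) : Matrix (Fin n) (Fin n) ℝ :=
  ((1 - τ) / sTau σ A Abar B Bbar τ P) •
    (DPhi σ A Abar B Bbar P H
      - Matrix.trace (DPhi σ A Abar B Bbar P H) • PhiHat σ A Abar B Bbar τ P)

/-- The local Lipschitz modulus `Lip(P,τ) = sup{‖DΦ̂_τ(P)[H]‖ : H symmetric, ‖H‖ = 1}`. -/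
def LipMod (σ : ℝ) (A Abar : Matrix (Fin n) (Fin n) ℝ) (B Bbar : Matrix (Fin n) (Fin m) ℝ)
    (τ : ℝ) (P : Matrix (Fin n) (Fin n) ℝ) : ℝ :=
  ⨆ H : {H : Matrix (Fin n) (Fin n) ℝ // H.IsSymm ∧ specNorm H = 1},
    specNorm (DPhiHat σ A Abar B Bbar τ P H.1)

/-! ### Probabilistic definitions -/

/-- The Gaussian measure on `ℝ` with mean `0` and variance `σ²`. -/
def gauss (σ : ℝ) : Measure ℝ := gaussianReal 0 ⟨σ ^ 2, sq_nonneg σ⟩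

/-- The Gaussian expectation `E_ω[((A+Āω)x + (B+B̄ω)v)ᵀ·P·((A+Āω)x + (B+B̄ω)v)]`. -/
def qform (σ : ℝ) (A Abar : Matrix (Fin n) (Fin n) ℝ) (B Bbar : Matrix (Fin n) (Fin m) ℝ)
    (P : Matrix (Fin n) (Fin n) ℝ) (x : Fin n → ℝ) (v : Fin m → ℝ) : ℝ :=
  ∫ s, (((A + s • Abar).mulVec x + (B + s • Bbar).mulVec v) ⬝ᵥ
      P.mulVec ((A + s • Abar).mulVec x + (B + s • Bbar).mulVec v)) ∂(gauss σ)

/-- The data of the stochastic control system: a probability space `(Ω, F, Pr)`,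
system matrices `A, Ā, B, B̄`, a noise level `σ > 0`, an i.i.d. sequence `w` of
Gaussian random variables with mean `0` and variance `σ²`, and a sub-σ-algebra `G`
independent of the noise. -/
structure Ctx (n m : ℕ) (Ω : Type) [mΩ : MeasurableSpace Ω] where
  Pr : Measure Ω
  isProb : IsProbabilityMeasure Pr
  σ : ℝ
  hσ : 0 < σ
  A : Matrix (Fin n) (Fin n) ℝ
  Abar : Matrix (Fin n) (Fin n) ℝ
  B : Matrix (Fin n) (Fin m) ℝ
  Bbar : Matrix (Fin n) (Fin m) ℝ
  w : ℕ → Ω → ℝ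
  hw_meas : ∀ k, Measurable (w k)
  hw_gauss : ∀ k, Pr.map (w k) = gauss σ
  hw_iid : iIndepFun w Pr
  G : MeasurableSpace Ω
  hG : G ≤ mΩ
  hw_indep_G : Indep (⨆ k, MeasurableSpace.comap (w k) inferInstance) G Pr

variable {Ω : Type} [MeasurableSpace Ω]

/-- The filtration `F_k = G ∨ σ(ω₀, …, ω_{k−1})`. -/
def Ctx.Fk (C : Ctx n m Ω) (k : ℕ) : MeasurableSpace Ω :=
  C.G ⊔ ⨆ i ∈ Finset.range k, MeasurableSpace.comap (C.w i) inferInstance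

/-- Admissible policies: `u_k` is `F_k`-measurable and square-integrable. -/
def Ctx.Admissible (C : Ctx n m Ω) (u : ℕ → Ω → Fin m → ℝ) : Prop :=
  ∀ k, Measurable[C.Fk k] (u k) ∧ MemLp (u k) 2 C.Pr

/-- Admissible initial states: `G`-measurable and square-integrable. -/
def Ctx.InitOK (C : Ctx n m Ω) (x : Ω → Fin n → ℝ) : Prop :=
  Measurable[C.G] x ∧ MemLp x 2 C.Pr

/-- The state trajectory `x_{k+1} = (A + Ā·ω_k)x_k + (B + B̄·ω_k)u_k`. -/
def Ctx.traj (C : Ctx n m Ω) (x0 : Ω → Fin n → ℝ) (u : ℕ → Ω → Fin m → ℝ) :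
    ℕ → Ω → Fin n → ℝ
  | 0 => x0
  | k + 1 => fun s =>
      (C.A + C.w k s • C.Abar).mulVec (C.traj x0 u k s)
      + (C.B + C.w k s • C.Bbar).mulVec (u k s)

/-- `E[xᵀx]`. -/
def msSq {n : ℕ} (Pr : Measure Ω) (x : Ω → Fin n → ℝ) : ℝ := ∫ s, x s ⬝ᵥ x s ∂Pr

/-- The mean-square norm `‖x‖_ms = (E[xᵀx])^{1/2}`. -/
def msNorm {n : ℕ} (Pr : Measure Ω) (x : Ω → Fin n → ℝ) : ℝ := Real.sqrt (msSq Pr x)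

/-- The mean-square stabilizing rate `ρ(u)` of a policy. -/
def Ctx.rate (C : Ctx n m Ω) (u : ℕ → Ω → Fin m → ℝ) : ℝ :=
  sInf {ρ : ℝ | 0 ≤ ρ ∧ ∃ κ : ℝ, 0 ≤ κ ∧ ∀ x0, C.InitOK x0 → ∀ k : ℕ,
    msSq C.Pr (C.traj x0 u k) ≤ κ * ρ ^ (2 * k) * msSq C.Pr x0}

/-- The optimal stabilizing rate `ρ* = inf_{u ∈ U} ρ(u)`. -/
def Ctx.rhoStar (C : Ctx n m Ω) : ℝ :=
  sInf {r : ℝ | ∃ u, C.Admissible u ∧ r = C.rate u}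

/-- `η(x) = inf_{u ∈ U} sup_{k ∈ ℕ} ‖x_k‖_ms/(ρ*)^k` (with values in `[0,∞]`). -/
def Ctx.eta (C : Ctx n m Ω) (x : Ω → Fin n → ℝ) : ℝ≥0∞ :=
  ⨅ (u : ℕ → Ω → Fin m → ℝ) (_ : C.Admissible u),
    ⨆ k : ℕ, ENNReal.ofReal (msNorm C.Pr (C.traj x u k) / C.rhoStar ^ k)

/-- The per-trajectory mean-square stabilizing rate `ρ(u; x₀)`. -/
def Ctx.rateAt (C : Ctx n m Ω) (x0 : Ω → Fin n → ℝ) (u : ℕ → Ω → Fin m → ℝ) : ℝ :=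
  sInf {ρ : ℝ | 0 ≤ ρ ∧ ∃ κ : ℝ, 0 ≤ κ ∧ ∀ k : ℕ,
    msSq C.Pr (C.traj x0 u k) ≤ κ * ρ ^ (2 * k) * msSq C.Pr x0}

/-- The cost `J(x₀,u) = limsup_k (1/k)·log(E[x_kᵀx_k]/E[x₀ᵀx₀])`. -/
def Ctx.J (C : Ctx n m Ω) (x0 : Ω → Fin n → ℝ) (u : ℕ → Ω → Fin m → ℝ) : ℝ :=
  Filter.limsup
    (fun k : ℕ => (1 / (k : ℝ)) * Real.log (msSq C.Pr (C.traj x0 u k) / msSq C.Pr x0))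
    Filter.atTop

/-- Feedback policies: `u_k = μ_k(x_k)` for Borel-measurable `μ_k`. -/
def Ctx.IsFeedback (C : Ctx n m Ω) (x0 : Ω → Fin n → ℝ) (u : ℕ → Ω → Fin m → ℝ) : Prop :=
  ∃ μ : ℕ → (Fin n → ℝ) → Fin m → ℝ, (∀ k, Measurable (μ k)) ∧
    ∀ k s, u k s = μ k (C.traj x0 u k s)

/-- The closed-loop trajectory under a stationary feedback law `μ`. -/
def Ctx.fbTraj (C : Ctx n m Ω) (x0 : Ω → Fin n → ℝ) (μ : (Fin n → ℝ) → Fin m → ℝ) :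
    ℕ → Ω → Fin n → ℝ
  | 0 => x0
  | k + 1 => fun s =>
      (C.A + C.w k s • C.Abar).mulVec (C.fbTraj x0 μ k s)
      + (C.B + C.w k s • C.Bbar).mulVec (μ (C.fbTraj x0 μ k s))

/-- The stationary policy `u* given by `u*_k = μ(x*_k)` along its own closed-loop
trajectory, for a stationary feedback law `μ`. -/
def Ctx.fbPolicy (C : Ctx n m Ω) (x0 : Ω → Fin n → ℝ) (μ : (Fin n → ℝ) → Fin m → ℝ) :
    ℕ → Ω → Fin m → ℝ :=
  fun k s => μ (C.fbTraj x0 μ k s)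

/-- The linear feedback policy `u*_k = −K·x*_k` along its own trajectory. -/
def Ctx.linFbPolicy (C : Ctx n m Ω) (x0 : Ω → Fin n → ℝ) (K : Matrix (Fin m) (Fin n) ℝ) :
    ℕ → Ω → Fin m → ℝ :=
  C.fbPolicy x0 (fun x => -(K.mulVec x))

/-- `ξ_♯(x) = inf_{v ∈ ℝ^m} ‖(A + Ā·ω)x + (B + B̄·ω)v‖_ms`, realized with `ω = ω₀`. -/
def Ctx.xiSharp (C : Ctx n m Ω) (x : Ω → Fin n → ℝ) : ℝ :=
  ⨅ v : Fin m → ℝ, msNorm C.Pr (fun s =>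
    (C.A + C.w 0 s • C.Abar).mulVec (x s) + (C.B + C.w 0 s • C.Bbar).mulVec v)

/-- Extended-real logarithm: `log t` for `t > 0` and `−∞` for `t ≤ 0`. -/
def elog (t : ℝ) : EReal := if t ≤ 0 then ⊥ else ((Real.log t : ℝ) : EReal)

/-- The cost `J(x₀,u)` interpreted with values in `[−∞,∞]`. -/
def Ctx.Je (C : Ctx n m Ω) (x0 : Ω → Fin n → ℝ) (u : ℕ → Ω → Fin m → ℝ) : EReal :=
  Filter.limsup
    (fun k : ℕ => ((1 / (k : ℝ) : ℝ) : EReal) * elog (msSq C.Pr (C.traj x0 u k) / msSq C.Pr x0))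
    Filter.atTop


/-! ### Auxiliary lemmas for Statement 0 -/

section Aux

variable {n m : ℕ} {Ω : Type} [mΩ : MeasurableSpace Ω]

private lemma dot_self_nonneg {d : ℕ} (v : Fin d → ℝ) : 0 ≤ v ⬝ᵥ v :=
  Finset.sum_nonneg fun _ _ => mul_self_nonneg _

private lemma msSq_nonneg {d : ℕ} (Pr : Measure Ω) (f : Ω → Fin d → ℝ) : 0 ≤ msSq Pr f :=
  integral_nonneg fun s => dot_self_nonneg (f s)

private lemma msNorm_nonneg {d : ℕ} (Pr : Measure Ω) (f : Ω → Fin d → ℝ) : 0 ≤ msNorm Pr f :=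
  Real.sqrt_nonneg _

private lemma msSq_smul {d : ℕ} (Pr : Measure Ω) (f : Ω → Fin d → ℝ) (α : ℝ) :
    msSq Pr (fun s => α • f s) = α ^ 2 * msSq Pr f := by
  unfold msSq
  rw [← integral_const_mul]
  refine integral_congr_ae (Filter.Eventually.of_forall fun s => ?_)
  simp only [smul_dotProduct, dotProduct_smul, smul_eq_mul]
  ring

private lemma msNorm_smul {d : ℕ} (Pr : Measure Ω) (f : Ω → Fin d → ℝ) (α : ℝ) :
    msNorm Pr (fun s => α • f s) = |α| * msNorm Pr f := by
  rw [msNorm, msNorm, msSq_smul, Real.sqrt_mul (sq_nonneg α), Real.sqrt_sq_eq_abs]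

/-- The identity, viewed as continuous linear map into Euclidean space. -/
private noncomputable def toE (d : ℕ) : (Fin d → ℝ) →L[ℝ] EuclideanSpace ℝ (Fin d) :=
  ((EuclideanSpace.equiv (Fin d) ℝ).symm : (Fin d → ℝ) ≃L[ℝ] EuclideanSpace ℝ (Fin d))

private lemma msNorm_eq_norm {d : ℕ} {Pr : Measure Ω} {f : Ω → Fin d → ℝ}
    (hf : MemLp f 2 Pr) :
    msNorm Pr f = ‖MemLp.toLp ((toE d) ∘ f) ((toE d).comp_memLp' hf)‖ := by
  have hF := (toE d).comp_memLp' hf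
  set φ := MemLp.toLp ((toE d) ∘ f) hF with hφ
  have h1 : (inner ℝ φ φ : ℝ) = msSq Pr f := by
    rw [MeasureTheory.L2.inner_def]
    refine integral_congr_ae ?_
    filter_upwards [hF.coeFn_toLp] with s hs
    rw [hs]
    simp [toE, PiLp.inner_apply, RCLike.inner_apply, dotProduct, Function.comp,
      EuclideanSpace.norm_sq_eq, Real.norm_eq_abs, sq_abs]
    exact Finset.sum_congr rfl fun i _ => pow_two _
  have h2 : ‖φ‖ ^ 2 = msSq Pr f := by rw [← h1, real_inner_self_eq_norm_sq]
  rw [msNorm, ← h2, Real.sqrt_sq (norm_nonneg _)]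

private lemma msNorm_add_le {d : ℕ} {Pr : Measure Ω} {f g : Ω → Fin d → ℝ}
    (hf : MemLp f 2 Pr) (hg : MemLp g 2 Pr) :
    msNorm Pr (fun s => f s + g s) ≤ msNorm Pr f + msNorm Pr g := by
  have hfg : MemLp (fun s => f s + g s) 2 Pr := hf.add hg
  rw [msNorm_eq_norm hf, msNorm_eq_norm hg, msNorm_eq_norm hfg]
  have heq : MemLp.toLp ((toE d) ∘ fun s => f s + g s) ((toE d).comp_memLp' hfg)
      = MemLp.toLp ((toE d) ∘ f) ((toE d).comp_memLp' hf)
        + MemLp.toLp ((toE d) ∘ g) ((toE d).comp_memLp' hg) := by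
    rw [← MemLp.toLp_add]
    exact MemLp.toLp_congr _ _ (Filter.Eventually.of_forall fun s => by
      simp [Function.comp, map_add])
  rw [heq]
  exact norm_add_le _ _

/-! #### Independence of the noise from the past -/

/-- The `Option`-indexed family of σ-algebras: `G` and the `σ(w i)`. -/
private def optAlg (C : Ctx n m Ω) : Option ℕ → MeasurableSpace Ω
  | none => C.G
  | some i => MeasurableSpace.comap (C.w i) inferInstance

private lemma optAlg_le (C : Ctx n m Ω) : ∀ o, optAlg C o ≤ mΩ
  | none => C.hG
  | some i => (C.hw_meas i).comap_le

private lemma meas_biInter_opt (C : Ctx n m Ω) (t : Finset (Option ℕ))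
    (f : Option ℕ → Set Ω) (hnone : none ∉ t)
    (hf : ∀ i ∈ t, MeasurableSet[optAlg C i] (f i)) :
    C.Pr (⋂ i ∈ t, f i) = ∏ i ∈ t, C.Pr (f i) := by
  classical
  set t₀ : Finset ℕ := t.preimage some (Option.some_injective ℕ).injOn with ht₀
  have himg : t₀.image some = t := by
    ext o
    cases o with
    | none => simp [hnone]
    | some i => simp [ht₀, Finset.mem_preimage]
  rw [← himg, Finset.set_biInter_finset_image,
    Finset.prod_image (fun a _ b _ h => Option.some_injective ℕ h)]
  exact C.hw_iid.meas_biInter fun i hi =>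
    hf (some i) (himg ▸ Finset.mem_image_of_mem some hi)

private lemma iIndepOpt (C : Ctx n m Ω) : ProbabilityTheory.iIndep (optAlg C) C.Pr := by
  haveI := C.isProb
  rw [ProbabilityTheory.iIndep_iff]
  intro s f hf
  by_cases hns : none ∈ s
  · have hrw : s = insert none (s.erase none) := (Finset.insert_erase hns).symm
    rw [hrw, Finset.set_biInter_insert, Finset.prod_insert (Finset.notMem_erase _ _)]
    have hN : MeasurableSet[⨆ i, MeasurableSpace.comap (C.w i) inferInstance]
        (⋂ i ∈ s.erase none, f i) := by
      refine Finset.measurableSet_biInter _ fun o ho => ?_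
      obtain ⟨j, rfl⟩ := Option.ne_none_iff_exists'.mp (Finset.ne_of_mem_erase ho)
      exact le_iSup (fun i => MeasurableSpace.comap (C.w i) inferInstance) j _
        (hf _ (Finset.mem_of_mem_erase ho))
    have hindep := (ProbabilityTheory.Indep_iff _ _ _).mp C.hw_indep_G _ _ hN
      (hf none hns)
    rw [Set.inter_comm] at hindep
    rw [hindep, meas_biInter_opt C _ f (Finset.notMem_erase _ _)
      (fun i hi => hf i (Finset.mem_of_mem_erase hi)), mul_comm]
  · exact meas_biInter_opt C s f hns hf

private lemma indep_w_Fk (C : Ctx n m Ω) (k : ℕ) :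
    ProbabilityTheory.Indep (MeasurableSpace.comap (C.w k) inferInstance) (C.Fk k) C.Pr := by
  haveI := C.isProb
  have h := ProbabilityTheory.indep_biSup_compl (optAlg_le C) (iIndepOpt C)
    {some k}
  refine ProbabilityTheory.indep_of_indep_of_le_right
    (ProbabilityTheory.indep_of_indep_of_le_left h ?_) ?_
  · exact le_iSup₂ (f := fun o (_ : o ∈ ({some k} : Set (Option ℕ))) => optAlg C o)
      (some k) rfl
  · refine sup_le ?_ (iSup₂_le fun i hi => ?_)
    · exact le_iSup₂ (f := fun o (_ : o ∈ ({some k} : Set (Option ℕ))ᶜ) => optAlg C o)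
        none (by simp)
    · exact le_iSup₂ (f := fun o (_ : o ∈ ({some k} : Set (Option ℕ))ᶜ) => optAlg C o)
        (some i) (by simpa using (Finset.mem_range.1 hi).ne)

/-! #### Square-integrability of trajectories -/

private lemma Fk_le (C : Ctx n m Ω) (k : ℕ) : C.Fk k ≤ mΩ :=
  sup_le C.hG (iSup₂_le fun i _ => (C.hw_meas i).comap_le)

private lemma Fk_mono (C : Ctx n m Ω) {j k : ℕ} (h : j ≤ k) : C.Fk j ≤ C.Fk k := by
  refine sup_le le_sup_left (le_trans ?_ le_sup_right)
  exact iSup₂_le fun i hi =>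
    le_iSup₂ (f := fun i (_ : i ∈ Finset.range k) =>
      MeasurableSpace.comap (C.w i) inferInstance) i
      (Finset.mem_range.2 ((Finset.mem_range.1 hi).trans_le h))

private lemma memℒp_gauss {σ : ℝ} (hσ : 0 < σ) : MemLp (id : ℝ → ℝ) 2 (gauss σ) := by
  have hv : (⟨σ ^ 2, sq_nonneg σ⟩ : NNReal) ≠ 0 := by
    intro h
    have h2 := congrArg NNReal.toReal h
    change σ ^ 2 = 0 at h2
    exact (pow_pos hσ 2).ne' h2
  rw [memLp_two_iff_integrable_sq aestronglyMeasurable_id]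
  unfold gauss
  rw [ProbabilityTheory.gaussianReal_of_var_ne_zero _ hv]
  refine (integrable_withDensity_iff (ProbabilityTheory.measurable_gaussianPDF _ _)
      (Filter.Eventually.of_forall fun _ => ENNReal.ofReal_lt_top)).2 ?_
  have key : Integrable (fun x : ℝ => x ^ (2 : ℝ) * Real.exp (-(1 / (2 * σ ^ 2)) * x ^ 2))
      (volume : Measure ℝ) :=
    integrable_rpow_mul_exp_neg_mul_sq (by positivity) (by norm_num)
  refine ((key.const_mul ((Real.sqrt (2 * Real.pi * σ ^ 2))⁻¹)).congr ?_)
  refine Filter.Eventually.of_forall fun x => ?_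
  have hx2 : x ^ (2 : ℝ) = x ^ (2 : ℕ) := by
    rw [show (2 : ℝ) = ((2 : ℕ) : ℝ) by norm_num, Real.rpow_natCast]
  simp only [id_eq, ProbabilityTheory.gaussianPDF, ProbabilityTheory.gaussianPDFReal, sub_zero]
  show _ = x ^ 2 * (ENNReal.ofReal ((Real.sqrt (2 * Real.pi * σ ^ 2))⁻¹
    * Real.exp (-x ^ 2 / (2 * σ ^ 2)))).toReal
  rw [ENNReal.toReal_ofReal (by positivity)]
  rw [hx2, show -x ^ 2 / (2 * σ ^ 2) = -(1 / (2 * σ ^ 2)) * x ^ 2 by ring]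
  ring

private lemma memℒp_w (C : Ctx n m Ω) (k : ℕ) : MemLp (C.w k) 2 C.Pr := by
  have h := memℒp_gauss C.hσ
  rw [← C.hw_gauss k] at h
  exact (memLp_map_measure_iff aestronglyMeasurable_id (C.hw_meas k).aemeasurable).mp h

private lemma memℒp_w_smul (C : Ctx n m Ω) (k : ℕ) {d : ℕ} {h : Ω → Fin d → ℝ}
    (hmeas : Measurable[C.Fk k] h) (hL : MemLp h 2 C.Pr) :
    MemLp (fun s => C.w k s • h s) 2 C.Pr := by
  haveI := C.isProb
  have hmeas' : Measurable h := hmeas.mono (Fk_le C k) le_rfl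
  have hsm : AEStronglyMeasurable (fun s => C.w k s • h s) C.Pr :=
    ((C.hw_meas k).smul hmeas').aestronglyMeasurable
  rw [memLp_two_iff_integrable_sq_norm hsm]
  have hind : ProbabilityTheory.IndepFun (fun s => C.w k s ^ 2)
      (fun s => ‖h s‖ ^ 2) C.Pr := by
    have h1 : ProbabilityTheory.IndepFun (C.w k) h C.Pr := by
      rw [ProbabilityTheory.IndepFun_iff_Indep]
      exact ProbabilityTheory.indep_of_indep_of_le_right (indep_w_Fk C k)
        (measurable_iff_comap_le.mp hmeas)
    exact h1.comp (measurable_id.pow_const 2) (measurable_norm.pow_const 2)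
  have hi1 : Integrable (fun s => C.w k s ^ 2) C.Pr :=
    (memLp_two_iff_integrable_sq (C.hw_meas k).aestronglyMeasurable).mp (memℒp_w C k)
  have hi2 : Integrable (fun s => ‖h s‖ ^ 2) C.Pr :=
    (memLp_two_iff_integrable_sq_norm hL.aestronglyMeasurable).mp hL
  refine (hind.integrable_mul hi1 hi2).congr
    (Filter.Eventually.of_forall fun s => ?_)
  simp [norm_smul, mul_pow, sq_abs]

private lemma memℒp_mulVec {d e : ℕ} {Pr : Measure Ω} {f : Ω → Fin d → ℝ}
    (M : Matrix (Fin e) (Fin d) ℝ) (hf : MemLp f 2 Pr) :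
    MemLp (fun s => M.mulVec (f s)) 2 Pr :=
  (LinearMap.toContinuousLinearMap M.mulVecLin).comp_memLp' hf

private lemma measurable_mulVec {d e : ℕ} {m' : MeasurableSpace Ω} {f : Ω → Fin d → ℝ}
    (M : Matrix (Fin e) (Fin d) ℝ) (hf : Measurable[m'] f) :
    Measurable[m'] (fun s => M.mulVec (f s)) :=
  (LinearMap.toContinuousLinearMap M.mulVecLin).continuous.measurable.comp hf

private lemma traj_memℒp (C : Ctx n m Ω) {x0 : Ω → Fin n → ℝ} {u : ℕ → Ω → Fin m → ℝ}
    (hx : C.InitOK x0) (hu : C.Admissible u) (k : ℕ) :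
    Measurable[C.Fk k] (C.traj x0 u k) ∧ MemLp (C.traj x0 u k) 2 C.Pr := by
  induction k with
  | zero => exact ⟨hx.1.mono le_sup_left le_rfl, hx.2⟩
  | succ k ih =>
    have hwk : Measurable[C.Fk (k + 1)] (C.w k) := by
      have h1 : MeasurableSpace.comap (C.w k) inferInstance ≤ C.Fk (k + 1) :=
        le_trans (le_iSup₂ (f := fun i (_ : i ∈ Finset.range (k + 1)) =>
          MeasurableSpace.comap (C.w i) inferInstance) k (Finset.self_mem_range_succ k))
          le_sup_right
      exact (Measurable.of_comap_le le_rfl).mono h1 le_rfl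
    have heq : C.traj x0 u (k + 1) = fun s =>
        (C.A.mulVec (C.traj x0 u k s) + C.w k s • C.Abar.mulVec (C.traj x0 u k s))
        + (C.B.mulVec (u k s) + C.w k s • C.Bbar.mulVec (u k s)) := by
      funext s
      show (C.A + C.w k s • C.Abar).mulVec _ + (C.B + C.w k s • C.Bbar).mulVec _ = _
      rw [Matrix.add_mulVec, Matrix.add_mulVec, Matrix.smul_mulVec,
        Matrix.smul_mulVec]
    constructor
    · rw [heq]
      have hxk : Measurable[C.Fk (k + 1)] (C.traj x0 u k) :=
        ih.1.mono (Fk_mono C k.le_succ) le_rfl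
      have huk : Measurable[C.Fk (k + 1)] (u k) := (hu k).1.mono (Fk_mono C k.le_succ) le_rfl
      exact ((measurable_mulVec _ hxk).add (hwk.smul (measurable_mulVec _ hxk))).add
        ((measurable_mulVec _ huk).add (hwk.smul (measurable_mulVec _ huk)))
    · rw [heq]
      have h1 := memℒp_mulVec C.A ih.2
      have h2 := memℒp_w_smul C k (measurable_mulVec C.Abar ih.1) (memℒp_mulVec C.Abar ih.2)
      have h3 := memℒp_mulVec C.B (hu k).2
      have h4 := memℒp_w_smul C k (measurable_mulVec C.Bbar (hu k).1)
        (memℒp_mulVec C.Bbar (hu k).2)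
      exact (h1.add h2).add (h3.add h4)

/-! #### Policies and trajectories -/

private lemma admissible_zero (C : Ctx n m Ω) : C.Admissible (fun _ _ => 0) := by
  haveI := C.isProb
  exact fun k => ⟨measurable_const, memLp_const 0⟩

private lemma admissible_smul (C : Ctx n m Ω) {u : ℕ → Ω → Fin m → ℝ}
    (hu : C.Admissible u) (α : ℝ) : C.Admissible (fun k s => α • u k s) :=
  fun k => ⟨(hu k).1.const_smul α, (hu k).2.const_smul α⟩

private lemma admissible_add (C : Ctx n m Ω) {u v : ℕ → Ω → Fin m → ℝ}
    (hu : C.Admissible u) (hv : C.Admissible v) :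
    C.Admissible (fun k s => u k s + v k s) :=
  fun k => ⟨(hu k).1.add (hv k).1, (hu k).2.add (hv k).2⟩

private lemma traj_smul (C : Ctx n m Ω) (x : Ω → Fin n → ℝ) (u : ℕ → Ω → Fin m → ℝ)
    (α : ℝ) : ∀ (k : ℕ) (s : Ω),
      C.traj (fun t => α • x t) (fun j t => α • u j t) k s = α • C.traj x u k s
  | 0, _ => rfl
  | k + 1, s => by
    simp only [Ctx.traj, traj_smul C x u α k s, Matrix.mulVec_smul, smul_add]

private lemma traj_add (C : Ctx n m Ω) (x y : Ω → Fin n → ℝ) (u v : ℕ → Ω → Fin m → ℝ) :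
    ∀ (k : ℕ) (s : Ω),
      C.traj (fun t => x t + y t) (fun j t => u j t + v j t) k s
        = C.traj x u k s + C.traj y v k s
  | 0, _ => rfl
  | k + 1, s => by
    simp only [Ctx.traj, traj_add C x y u v k s, Matrix.mulVec_add]
    abel

private lemma traj_zero_policy (C : Ctx n m Ω) (x : Ω → Fin n → ℝ) {s : Ω} (hx : x s = 0) :
    ∀ k : ℕ, C.traj x (fun _ _ => 0) k s = 0
  | 0 => hx
  | k + 1 => by
    simp [Ctx.traj, traj_zero_policy C x hx k, Matrix.mulVec_zero]

/-! #### Basic facts about `η` -/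

private lemma eta_le_sup (C : Ctx n m Ω) (x : Ω → Fin n → ℝ) {u : ℕ → Ω → Fin m → ℝ}
    (hu : C.Admissible u) :
    C.eta x ≤ ⨆ k : ℕ, ENNReal.ofReal (msNorm C.Pr (C.traj x u k) / C.rhoStar ^ k) :=
  iInf₂_le u hu

private lemma le_eta (C : Ctx n m Ω) (x : Ω → Fin n → ℝ) {a : ℝ≥0∞}
    (h : ∀ u, C.Admissible u →
      a ≤ ⨆ k : ℕ, ENNReal.ofReal (msNorm C.Pr (C.traj x u k) / C.rhoStar ^ k)) :
    a ≤ C.eta x :=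
  le_iInf₂ h

private lemma eta_eq_zero_of_ae (C : Ctx n m Ω) {x : Ω → Fin n → ℝ}
    (hx : x =ᵐ[C.Pr] 0) : C.eta x = 0 := by
  refine le_antisymm (le_trans (eta_le_sup C x (admissible_zero C)) ?_) zero_le
  refine iSup_le fun k => ?_
  have h0 : msSq C.Pr (C.traj x (fun _ _ => 0) k) = 0 := by
    have he : (fun s => C.traj x (fun _ _ => 0) k s ⬝ᵥ C.traj x (fun _ _ => 0) k s)
        =ᵐ[C.Pr] (fun _ => (0 : ℝ)) := by
      filter_upwards [hx] with s hs
      have hs0 : x s = 0 := hs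
      simp [traj_zero_policy C x hs0 k]
    rw [msSq, integral_congr_ae he, integral_zero]
  rw [msNorm, h0, Real.sqrt_zero, zero_div, ENNReal.ofReal_zero]

private lemma ofReal_msNorm_le_eta (C : Ctx n m Ω) (x : Ω → Fin n → ℝ) :
    ENNReal.ofReal (msNorm C.Pr x) ≤ C.eta x := by
  refine le_eta C x fun u hu => ?_
  refine le_trans (le_of_eq ?_) (le_iSup _ 0)
  simp [Ctx.traj]

private lemma eta_smul_le (C : Ctx n m Ω) (x : Ω → Fin n → ℝ) (α : ℝ) :
    C.eta (fun s => α • x s) ≤ ENNReal.ofReal |α| * C.eta x := by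
  rcases eq_or_ne α 0 with rfl | hα
  · have h0 : (fun s => (0 : ℝ) • x s) =ᵐ[C.Pr] 0 :=
      Filter.Eventually.of_forall (by simp)
    rw [eta_eq_zero_of_ae C h0]
    exact zero_le
  · set c := ENNReal.ofReal |α| with hc
    have hc0 : c ≠ 0 := by
      simp only [hc, ne_eq, ENNReal.ofReal_eq_zero, not_le]
      exact abs_pos.2 hα
    have hct : c ≠ ⊤ := ENNReal.ofReal_ne_top
    have key : ∀ u, C.Admissible u → C.eta (fun s => α • x s)
        ≤ c * ⨆ k : ℕ, ENNReal.ofReal (msNorm C.Pr (C.traj x u k) / C.rhoStar ^ k) := by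
      intro u hu
      refine le_trans (eta_le_sup C _ (admissible_smul C hu α)) ?_
      rw [ENNReal.mul_iSup]
      refine iSup_mono fun k => le_of_eq ?_
      have htr : C.traj (fun s => α • x s) (fun j t => α • u j t) k
          = fun s => α • C.traj x u k s := funext fun s => traj_smul C x u α k s
      rw [htr, msNorm_smul, mul_div_assoc, ENNReal.ofReal_mul (abs_nonneg α)]
    have h2 : c⁻¹ * C.eta (fun s => α • x s) ≤ C.eta x := by
      refine le_eta C x fun u hu => ?_
      calc c⁻¹ * C.eta (fun s => α • x s)
          ≤ c⁻¹ * (c * ⨆ k : ℕ, ENNReal.ofReal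
              (msNorm C.Pr (C.traj x u k) / C.rhoStar ^ k)) :=
            mul_le_mul_right (key u hu) _
        _ = _ := by rw [← mul_assoc, ENNReal.inv_mul_cancel hc0 hct, one_mul]
    calc C.eta (fun s => α • x s)
        = c * (c⁻¹ * C.eta (fun s => α • x s)) := by
          rw [← mul_assoc, ENNReal.mul_inv_cancel hc0 hct, one_mul]
      _ ≤ c * C.eta x := mul_le_mul_right h2 c

end Aux
/-- If `ρ* > 0` and `η(x) < ∞` for every `G`-measurable
`x ∈ L²(Ω;ℝⁿ)`, then `η` is a norm on the space of `G`-measurable elements of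
`L²(Ω;ℝⁿ)`: nonnegativity, definiteness (up to a.s. equality), absolute
homogeneity, and the triangle inequality. -/
theorem eta_is_norm {n m : ℕ} {Ω : Type} [MeasurableSpace Ω] (C : Ctx n m Ω)
    (hn : 0 < n) (hm : 0 < m)
    (hrho : 0 < C.rhoStar)
    (hfin : ∀ x : Ω → Fin n → ℝ, C.InitOK x → C.eta x < ⊤) :
    (∀ x : Ω → Fin n → ℝ, C.InitOK x → 0 ≤ C.eta x) ∧
    (∀ x : Ω → Fin n → ℝ, C.InitOK x → (C.eta x = 0 ↔ x =ᵐ[C.Pr] 0)) ∧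
    (∀ x : Ω → Fin n → ℝ, C.InitOK x → ∀ α : ℝ,
      C.eta (fun s => α • x s) = ENNReal.ofReal |α| * C.eta x) ∧
    (∀ x y : Ω → Fin n → ℝ, C.InitOK x → C.InitOK y →
      C.eta (fun s => x s + y s) ≤ C.eta x + C.eta y) := by
  haveI := C.isProb
  refine ⟨fun x _ => zero_le, ?_, ?_, ?_⟩
  · -- definiteness
    intro x hx
    constructor
    · intro h
      have h1 : ENNReal.ofReal (msNorm C.Pr x) = 0 :=
        le_antisymm (h ▸ ofReal_msNorm_le_eta C x) zero_le
      have h2 : msNorm C.Pr x = 0 :=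
        le_antisymm (ENNReal.ofReal_eq_zero.mp h1) (msNorm_nonneg C.Pr x)
      have h3 : msSq C.Pr x = 0 := (Real.sqrt_eq_zero (msSq_nonneg C.Pr x)).mp h2
      have hco : ∀ i : Fin n, MemLp (fun s => x s i) 2 C.Pr := fun i =>
        (ContinuousLinearMap.proj (R := ℝ) (φ := fun _ : Fin n => ℝ) i).comp_memLp' hx.2
      have hint : Integrable (fun s => x s ⬝ᵥ x s) C.Pr := by
        have h4 : ∀ i : Fin n, Integrable (fun s => x s i * x s i) C.Pr := fun i => by
          simpa [pow_two] using
            (memLp_two_iff_integrable_sq (hco i).aestronglyMeasurable).mp (hco i)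
        have h5 := integrable_finset_sum (μ := C.Pr) Finset.univ fun i _ => h4 i
        exact h5.congr (Filter.Eventually.of_forall fun s => by
          simp [dotProduct])
      have h6 : (fun s => x s ⬝ᵥ x s) =ᵐ[C.Pr] 0 :=
        (integral_eq_zero_iff_of_nonneg_ae
          (Filter.Eventually.of_forall fun s => dot_self_nonneg (x s)) hint).mp h3
      filter_upwards [h6] with s hs
      exact dotProduct_self_eq_zero.mp hs
    · exact fun h => eta_eq_zero_of_ae C h
  · -- homogeneity
    intro x hx α
    rcases eq_or_ne α 0 with rfl | hα
    · have h0 : C.eta (fun s => (0 : ℝ) • x s) = 0 :=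
        eta_eq_zero_of_ae C (Filter.Eventually.of_forall (by simp))
      rw [h0, abs_zero, ENNReal.ofReal_zero, zero_mul]
    · refine le_antisymm (eta_smul_le C x α) ?_
      have h := eta_smul_le C (fun s => α • x s) α⁻¹
      have hfun : (fun s => α⁻¹ • α • x s) = x := by
        funext s
        rw [smul_smul, inv_mul_cancel₀ hα, one_smul]
      rw [hfun] at h
      calc ENNReal.ofReal |α| * C.eta x
          ≤ ENNReal.ofReal |α| * (ENNReal.ofReal |α⁻¹| * C.eta (fun s => α • x s)) :=
            mul_le_mul_right h _
        _ = C.eta (fun s => α • x s) := by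
            rw [← mul_assoc, ← ENNReal.ofReal_mul (abs_nonneg α), abs_inv,
              mul_inv_cancel₀ (abs_ne_zero.mpr hα), ENNReal.ofReal_one, one_mul]
  · -- triangle inequality
    intro x y hx hy
    have core : ∀ u, C.Admissible u → ∀ v, C.Admissible v →
        C.eta (fun s => x s + y s)
          ≤ (⨆ k : ℕ, ENNReal.ofReal (msNorm C.Pr (C.traj x u k) / C.rhoStar ^ k))
            + ⨆ k : ℕ, ENNReal.ofReal (msNorm C.Pr (C.traj y v k) / C.rhoStar ^ k) := by
      intro u hu v hv
      refine le_trans (eta_le_sup C _ (admissible_add C hu hv)) (iSup_le fun k => ?_)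
      have htr : C.traj (fun s => x s + y s) (fun j t => u j t + v j t) k
          = fun s => C.traj x u k s + C.traj y v k s :=
        funext fun s => traj_add C x y u v k s
      have hρ : (0 : ℝ) < C.rhoStar ^ k := pow_pos hrho k
      have hmk := msNorm_add_le (traj_memℒp C hx hu k).2 (traj_memℒp C hy hv k).2
      calc ENNReal.ofReal
            (msNorm C.Pr (C.traj (fun s => x s + y s) (fun j t => u j t + v j t) k)
              / C.rhoStar ^ k)
          ≤ ENNReal.ofReal ((msNorm C.Pr (C.traj x u k) + msNorm C.Pr (C.traj y v k))
              / C.rhoStar ^ k) := by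
            refine ENNReal.ofReal_le_ofReal ?_
            rw [htr]
            exact (div_le_div_iff_of_pos_right hρ).mpr hmk
        _ = ENNReal.ofReal (msNorm C.Pr (C.traj x u k) / C.rhoStar ^ k)
            + ENNReal.ofReal (msNorm C.Pr (C.traj y v k) / C.rhoStar ^ k) := by
            rw [add_div, ENNReal.ofReal_add (div_nonneg (msNorm_nonneg _ _) hρ.le)
              (div_nonneg (msNorm_nonneg _ _) hρ.le)]
        _ ≤ _ := add_le_add
            (le_iSup (fun k : ℕ => ENNReal.ofReal
              (msNorm C.Pr (C.traj x u k) / C.rhoStar ^ k)) k)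
            (le_iSup (fun k : ℕ => ENNReal.ofReal
              (msNorm C.Pr (C.traj y v k) / C.rhoStar ^ k)) k)
    have hrw : C.eta x + C.eta y
        = ⨅ v, ⨅ (_ : C.Admissible v), ⨅ u, ⨅ (_ : C.Admissible u),
            ((⨆ k : ℕ, ENNReal.ofReal (msNorm C.Pr (C.traj x u k) / C.rhoStar ^ k))
              + ⨆ k : ℕ, ENNReal.ofReal (msNorm C.Pr (C.traj y v k) / C.rhoStar ^ k)) := by
      simp only [Ctx.eta, ENNReal.iInf_add, ENNReal.add_iInf]
    rw [hrw]
    exact le_iInf fun v => le_iInf fun hv => le_iInf fun u => le_iInf fun hu =>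
      core u hu v hv

end SCS
end
end

section
/- Assume R₀ := BᵀB + σ²·B̄ᵀB̄ is positive definite. Fix τ ∈ (0,1) and let P^(τ) be a symmetric positive definite matrix with Tr P^(τ) = 1 satisfying Φ̂_τ(P^(τ)) = P^(τ); set γ^(τ) := Tr((1−τ)·Φ(P^(τ)) + (τ/n)·I). Then γ^(τ)/(1−τ) − L(P^(τ)) = (τ/(n·(1−τ)))·λ_max((P^(τ))⁻¹). -/
open Matrix MeasureTheory ProbabilityTheory
open scoped ENNReal Classical

noncomputable section

namespace SCS

variable {n m : ℕ}

variable {Ω : Type} [MeasurableSpace Ω]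

lemma unit_abs_le {k : ℕ} (x : Fin k → ℝ) (hx : x ⬝ᵥ x = 1) (i : Fin k) : |x i| ≤ 1 := by
  have h : x i * x i ≤ 1 := by
    rw [← hx]
    exact Finset.single_le_sum (f := fun j => x j * x j)
      (fun j _ => mul_self_nonneg _) (Finset.mem_univ i)
  nlinarith [abs_nonneg (x i), abs_mul_abs_self (x i)]

lemma rayleigh_bddAbove {k : ℕ} (M : Matrix (Fin k) (Fin k) ℝ) :
    BddAbove (Set.range fun x : {x : Fin k → ℝ // x ⬝ᵥ x = 1} => x.1 ⬝ᵥ M.mulVec x.1) := by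
  refine ⟨∑ i, ∑ j, |M i j|, ?_⟩
  rintro _ ⟨x, rfl⟩
  simp only [dotProduct, Matrix.mulVec, Finset.mul_sum]
  refine Finset.sum_le_sum fun i _ => Finset.sum_le_sum fun j _ => ?_
  have h1 := unit_abs_le x.1 x.2 i
  have h2 := unit_abs_le x.1 x.2 j
  calc x.1 i * (M i j * x.1 j) ≤ |x.1 i * (M i j * x.1 j)| := le_abs_self _
    _ = |x.1 i| * |M i j| * |x.1 j| := by rw [abs_mul, abs_mul]; ring
    _ ≤ 1 * |M i j| * 1 := by gcongr
    _ = |M i j| := by ring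

lemma sphere_nonempty {k : ℕ} (hk : 0 < k) : Nonempty {x : Fin k → ℝ // x ⬝ᵥ x = 1} := by
  refine ⟨⟨Pi.single ⟨0, hk⟩ 1, ?_⟩⟩
  simp [dotProduct, Pi.single_apply, mul_ite, Finset.sum_ite_eq']

lemma lamMin_affine {k : ℕ} (hk : 0 < k) (M : Matrix (Fin k) (Fin k) ℝ)
    (c₁ c₂ : ℝ) (hc₂ : 0 < c₂) :
    lamMin (c₁ • (1 : Matrix (Fin k) (Fin k) ℝ) - c₂ • M) = c₁ - c₂ * lamMax M := by
  haveI := sphere_nonempty (k := k) hk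
  set g : {x : Fin k → ℝ // x ⬝ᵥ x = 1} → ℝ := fun x => x.1 ⬝ᵥ M.mulVec x.1 with hg
  have key : ∀ x : {x : Fin k → ℝ // x ⬝ᵥ x = 1},
      x.1 ⬝ᵥ (c₁ • (1 : Matrix (Fin k) (Fin k) ℝ) - c₂ • M).mulVec x.1
        = c₁ - c₂ * g x := by
    intro x
    rw [Matrix.sub_mulVec, dotProduct_sub, Matrix.smul_mulVec, Matrix.smul_mulVec,
      Matrix.one_mulVec, dotProduct_smul, dotProduct_smul, x.2]
    simp [hg, smul_eq_mul]
  have hbdd := rayleigh_bddAbove M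
  have hg_le : ∀ x, g x ≤ lamMax M := fun x => le_ciSup hbdd x
  have heq : lamMin (c₁ • (1 : Matrix (Fin k) (Fin k) ℝ) - c₂ • M)
      = ⨅ x, (c₁ - c₂ * g x) := iInf_congr key
  rw [heq]
  obtain ⟨C, hC⟩ := hbdd
  have hCg : ∀ x, g x ≤ C := fun x => hC ⟨x, rfl⟩
  have hbb : BddBelow (Set.range fun x => c₁ - c₂ * g x) := by
    refine ⟨c₁ - c₂ * C, ?_⟩
    rintro _ ⟨x, rfl⟩
    show c₁ - c₂ * C ≤ c₁ - c₂ * g x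
    nlinarith [mul_le_mul_of_nonneg_left (hCg x) hc₂.le]
  refine le_antisymm ?_ ?_
  · have hle : ∀ x, g x ≤ (c₁ - ⨅ x, (c₁ - c₂ * g x)) / c₂ := by
      intro x
      have h := ciInf_le hbb x
      rw [le_div_iff₀ hc₂]
      nlinarith
    have hlam : lamMax M ≤ (c₁ - ⨅ x, (c₁ - c₂ * g x)) / c₂ := ciSup_le hle
    rw [le_div_iff₀ hc₂] at hlam
    nlinarith
  · refine le_ciInf fun x => ?_
    nlinarith [mul_le_mul_of_nonneg_left (hg_le x) hc₂.le]

/-- The explicit gap formula: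
`γ^(τ)/(1−τ) − L(P^(τ)) = (τ/(n·(1−τ)))·λ_max((P^(τ))⁻¹)`. -/
theorem gap_formula {n m : ℕ} (hn : 0 < n) (hm : 0 < m)
    (σ : ℝ) (hσ : 0 < σ)
    (A Abar : Matrix (Fin n) (Fin n) ℝ) (B Bbar : Matrix (Fin n) (Fin m) ℝ)
    (hR0 : (Bᵀ * B + σ ^ 2 • (Bbarᵀ * Bbar)).PosDef)
    (τ : ℝ) (hτ : τ ∈ Set.Ioo (0 : ℝ) 1)
    (P : Matrix (Fin n) (Fin n) ℝ) (hP : P.PosDef) (htr : P.trace = 1)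
    (hfix : PhiHat σ A Abar B Bbar τ P = P)
    (γτ : ℝ)
    (hγ : γτ = Matrix.trace ((1 - τ) • Phi σ A Abar B Bbar P
      + (τ / (n : ℝ)) • (1 : Matrix (Fin n) (Fin n) ℝ))) :
    γτ / (1 - τ) - Lval σ A Abar B Bbar P
      = (τ / ((n : ℝ) * (1 - τ))) * lamMax P⁻¹ := by
  obtain ⟨hτ0, hτ1⟩ := hτ
  have h1τ : (0:ℝ) < 1 - τ := by linarith
  have hn' : (0:ℝ) < (n:ℝ) := Nat.cast_pos.mpr hn
  set Mt := (1 - τ) • Phi σ A Abar B Bbar P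
      + (τ / (n : ℝ)) • (1 : Matrix (Fin n) (Fin n) ℝ) with hMt
  have hfix' : (Matrix.trace Mt)⁻¹ • Mt = P := hfix
  have hγt : γτ = Matrix.trace Mt := hγ
  have hγne : γτ ≠ 0 := by
    intro h0
    rw [hγt] at h0
    rw [h0] at hfix'
    simp only [_root_.inv_zero, zero_smul] at hfix'
    rw [← hfix'] at htr
    simp at htr
  have hMP : Mt = γτ • P := by
    calc Mt = γτ • ((Matrix.trace Mt)⁻¹ • Mt) := by
          rw [smul_smul, ← hγt, mul_inv_cancel₀ hγne, one_smul]
      _ = γτ • P := by rw [hfix']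
  have hPhi : Phi σ A Abar B Bbar P
      = (1-τ)⁻¹ • (γτ • P - (τ / (n:ℝ)) • (1 : Matrix (Fin n) (Fin n) ℝ)) := by
    have h2 : (1 - τ) • Phi σ A Abar B Bbar P
        = γτ • P - (τ / (n:ℝ)) • (1 : Matrix (Fin n) (Fin n) ℝ) := by
      rw [← hMP, hMt]; abel
    rw [← h2, smul_smul, inv_mul_cancel₀ (ne_of_gt h1τ), one_smul]
  -- square root facts
  set S := (hP.posSemidef.1.eigenvectorUnitary.1
    * diagonal (fun i => Real.sqrt (hP.posSemidef.1.eigenvalues i))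
    * (star hP.posSemidef.1.eigenvectorUnitary : Matrix (Fin n) (Fin n) ℝ)) with hS
  have hS2 : S * S = P := by
    have hU : (star hP.posSemidef.1.eigenvectorUnitary : Matrix (Fin n) (Fin n) ℝ)
        * hP.posSemidef.1.eigenvectorUnitary.1 = 1 := Unitary.coe_star_mul_self _
    calc S * S = hP.posSemidef.1.eigenvectorUnitary.1
          * (diagonal (fun i => Real.sqrt (hP.posSemidef.1.eigenvalues i))
          * ((star hP.posSemidef.1.eigenvectorUnitary : Matrix (Fin n) (Fin n) ℝ)
            * hP.posSemidef.1.eigenvectorUnitary.1)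
          * diagonal (fun i => Real.sqrt (hP.posSemidef.1.eigenvalues i)))
          * (star hP.posSemidef.1.eigenvectorUnitary : Matrix (Fin n) (Fin n) ℝ) := by
          simp only [hS, Matrix.mul_assoc]
      _ = hP.posSemidef.1.eigenvectorUnitary.1
          * diagonal (RCLike.ofReal ∘ hP.posSemidef.1.eigenvalues)
          * (star hP.posSemidef.1.eigenvectorUnitary : Matrix (Fin n) (Fin n) ℝ) := by
          have hd : (fun i => Real.sqrt (hP.posSemidef.1.eigenvalues i)
              * Real.sqrt (hP.posSemidef.1.eigenvalues i))
              = RCLike.ofReal ∘ hP.posSemidef.1.eigenvalues := by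
            funext i
            simp [Real.mul_self_sqrt (hP.posSemidef.eigenvalues_nonneg i)]
          rw [hU, Matrix.mul_one, diagonal_mul_diagonal, hd]
      _ = P := hP.posSemidef.1.spectral_theorem.symm
  have hSdet : IsUnit S.det := by
    have hd : S.det * S.det = P.det := by rw [← Matrix.det_mul, hS2]
    have := hP.det_pos
    refine isUnit_iff_ne_zero.mpr fun h0 => ?_
    rw [h0, mul_zero] at hd
    rw [← hd] at this
    exact lt_irrefl _ this
  have hQ : invSqrt P = S⁻¹ := by
    rw [invSqrt, dif_pos hP.posSemidef]
  have hQPQ : S⁻¹ * P * S⁻¹ = 1 := by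
    rw [← hS2, show S⁻¹ * (S * S) = S⁻¹ * S * S from (Matrix.mul_assoc _ _ _).symm,
      Matrix.nonsing_inv_mul S hSdet, Matrix.one_mul, Matrix.mul_nonsing_inv S hSdet]
  have hQQ : S⁻¹ * S⁻¹ = P⁻¹ := by
    rw [← hS2, Matrix.mul_inv_rev S S]
  -- the transformed matrix
  set c₁ := (1-τ)⁻¹ * γτ with hc1
  set c₂ := (1-τ)⁻¹ * (τ / (n:ℝ)) with hc2
  have hc₂pos : 0 < c₂ := by
    apply mul_pos (inv_pos.mpr h1τ) (div_pos hτ0 hn')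
  have hX : invSqrt P * Phi σ A Abar B Bbar P * invSqrt P
      = c₁ • (1 : Matrix (Fin n) (Fin n) ℝ) - c₂ • P⁻¹ := by
    rw [hQ, hPhi]
    rw [Matrix.mul_smul, Matrix.smul_mul, Matrix.mul_sub, Matrix.sub_mul,
      Matrix.mul_smul, Matrix.smul_mul, Matrix.mul_smul, Matrix.smul_mul,
      Matrix.mul_one]
    rw [show S⁻¹ * P * S⁻¹ = (1 : Matrix (Fin n) (Fin n) ℝ) from hQPQ, hQQ]
    rw [smul_sub, smul_smul, smul_smul]
  have hL : Lval σ A Abar B Bbar P = c₁ - c₂ * lamMax P⁻¹ := by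
    rw [Lval, hX]
    exact lamMin_affine hn P⁻¹ c₁ c₂ hc₂pos
  rw [hL, hc1, hc2]
  field_simp
  ring


end SCS
end
end
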